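/- Let U ⊆ ℂ be open, g : U → ℂ holomorphic with g'(z) ≠ 0 for all z ∈ U, and f : U → ℝ twice continuously differentiable. Set T = 1 + |g|² and h = f/T. Then the pointwise identity Δh + (8|g'|²/T²) h = (|g'|²/T²) ( T·Δf/|g'|² − 4⟨∇f, g/g'⟩ + 4f ) holds on U, where ∇f denotes the complex number f_{,1} + i f_{,2} and ⟨w₁,w₂⟩ = Re(w̄₁ w₂). -/

import Mathlib

open Complex

noncomputable section

/-- Euclidean inner product on ℂ ≅ ℝ²: ⟨w₁,w₂⟩ = Re(w̄₁ w₂). -/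
def inn (w₁ w₂ : ℂ) : ℝ := ((starRingEnd ℂ) w₁ * w₂).re

/-- Partial derivative in u (z = u + iv). -/
def pd1 (f : ℂ → ℝ) (z : ℂ) : ℝ := fderiv ℝ f z 1
/-- Partial derivative in v (z = u + iv). -/
def pd2 (f : ℂ → ℝ) (z : ℂ) : ℝ := fderiv ℝ f z Complex.I
/-- Euclidean Laplacian Δf = f_{,11} + f_{,22}. -/
def lap (f : ℂ → ℝ) (z : ℂ) : ℝ := pd1 (pd1 f) z + pd2 (pd2 f) z

/-- Partial derivative in u of an ℝ³ ≅ ℂ × ℝ valued map. -/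
def pdv1 (f : ℂ → ℂ × ℝ) (z : ℂ) : ℂ × ℝ := fderiv ℝ f z 1
/-- Partial derivative in v of an ℝ³ ≅ ℂ × ℝ valued map. -/
def pdv2 (f : ℂ → ℂ × ℝ) (z : ℂ) : ℂ × ℝ := fderiv ℝ f z Complex.I
/-- Euclidean inner product on ℝ³ ≅ ℂ × ℝ. -/
def inn3 (p q : ℂ × ℝ) : ℝ := inn p.1 q.1 + p.2 * q.2

namespace StmtAux
lemma ev_eq {α : Type*} {f g : ℂ → α} {U : Set ℂ} (hU : IsOpen U) (h : ∀ w ∈ U, f w = g w)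
    {z : ℂ} (hz : z ∈ U) : f =ᶠ[nhds z] g :=
  Filter.eventuallyEq_of_mem (hU.mem_nhds hz) h
lemma pd1_congr {f g : ℂ → ℝ} {U : Set ℂ} (hU : IsOpen U) (h : ∀ w ∈ U, f w = g w)
    {z : ℂ} (hz : z ∈ U) : pd1 f z = pd1 g z := by
  unfold pd1; rw [(ev_eq hU h hz).fderiv_eq]
lemma pd2_congr {f g : ℂ → ℝ} {U : Set ℂ} (hU : IsOpen U) (h : ∀ w ∈ U, f w = g w)
    {z : ℂ} (hz : z ∈ U) : pd2 f z = pd2 g z := by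
  unfold pd2; rw [(ev_eq hU h hz).fderiv_eq]
lemma diff_congr {f g : ℂ → ℝ} {U : Set ℂ} (hU : IsOpen U) (h : ∀ w ∈ U, f w = g w)
    {z : ℂ} (hz : z ∈ U) (hg : DifferentiableAt ℝ g z) : DifferentiableAt ℝ f z :=
  (ev_eq hU h hz).differentiableAt_iff.mpr hg
lemma fd_mul {a b : ℂ → ℝ} {z : ℂ} (ha : DifferentiableAt ℝ a z) (hb : DifferentiableAt ℝ b z) (d : ℂ) :
    fderiv ℝ (fun w => a w * b w) z d = fderiv ℝ a z d * b z + a z * fderiv ℝ b z d := by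
  rw [fderiv_fun_mul ha hb]; simp; ring
lemma fd_add {a b : ℂ → ℝ} {z : ℂ} (ha : DifferentiableAt ℝ a z) (hb : DifferentiableAt ℝ b z) (d : ℂ) :
    fderiv ℝ (fun w => a w + b w) z d = fderiv ℝ a z d + fderiv ℝ b z d := by
  rw [fderiv_fun_add ha hb]; simp
lemma fd_neg {a : ℂ → ℝ} {z : ℂ} (d : ℂ) :
    fderiv ℝ (fun w => -(a w)) z d = -(fderiv ℝ a z d) := by
  rw [fderiv_fun_neg]; simp
lemma fd_cmul {a : ℂ → ℝ} {z : ℂ} (ha : DifferentiableAt ℝ a z) (c : ℝ) (d : ℂ) :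
    fderiv ℝ (fun w => c * a w) z d = c * fderiv ℝ a z d := by
  rw [fderiv_const_mul ha c]; simp
lemma fd_inv {T : ℂ → ℝ} {z : ℂ} (hT : DifferentiableAt ℝ T z) (h0 : T z ≠ 0) (d : ℂ) :
    fderiv ℝ (fun w => (T w)⁻¹) z d = -(fderiv ℝ T z d) / (T z)^2 := by
  have h1 : fderiv ℝ (fun w => (T w)⁻¹) z
      = (fderiv ℝ (fun x : ℝ => x⁻¹) (T z)).comp (fderiv ℝ T z) :=
    fderiv_comp z (differentiableAt_inv h0) hT
  rw [h1, fderiv_inv]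
  simp [div_eq_mul_inv]
lemma fd_div {a b : ℂ → ℝ} {z : ℂ} (ha : DifferentiableAt ℝ a z) (hb : DifferentiableAt ℝ b z)
    (h0 : b z ≠ 0) (d : ℂ) :
    fderiv ℝ (fun w => a w / b w) z d
      = (fderiv ℝ a z d * b z - a z * fderiv ℝ b z d) / (b z)^2 := by
  have h1 : (fun w => a w / b w) = fun w => a w * (b w)⁻¹ := funext fun w => div_eq_mul_inv _ _
  rw [h1, fd_mul (b := fun w => (b w)⁻¹) ha (hb.inv h0) d, fd_inv hb h0 d]
  field_simp
  ring
lemma diff_pd1 {f : ℂ → ℝ} {U : Set ℂ} (hU : IsOpen U) (hf : ContDiffOn ℝ 2 f U)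
    {z : ℂ} (hz : z ∈ U) : DifferentiableAt ℝ (pd1 f) z := by
  have h1 : ContDiffAt ℝ 2 f z := hf.contDiffAt (hU.mem_nhds hz)
  have h2 : ContDiffAt ℝ 1 (fderiv ℝ f) z := h1.fderiv_right (by norm_num)
  have h3 : DifferentiableAt ℝ (fderiv ℝ f) z := h2.differentiableAt (by norm_num)
  exact ((ContinuousLinearMap.apply ℝ ℝ (1:ℂ)).differentiable.differentiableAt).comp z h3
lemma diff_pd2 {f : ℂ → ℝ} {U : Set ℂ} (hU : IsOpen U) (hf : ContDiffOn ℝ 2 f U)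
    {z : ℂ} (hz : z ∈ U) : DifferentiableAt ℝ (pd2 f) z := by
  have h1 : ContDiffAt ℝ 2 f z := hf.contDiffAt (hU.mem_nhds hz)
  have h2 : ContDiffAt ℝ 1 (fderiv ℝ f) z := h1.fderiv_right (by norm_num)
  have h3 : DifferentiableAt ℝ (fderiv ℝ f) z := h2.differentiableAt (by norm_num)
  exact ((ContinuousLinearMap.apply ℝ ℝ (Complex.I)).differentiable.differentiableAt).comp z h3
lemma lap_mul {U : Set ℂ} (hU : IsOpen U) {a b : ℂ → ℝ} {z : ℂ} (hz : z ∈ U)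
    (ha : ∀ w ∈ U, DifferentiableAt ℝ a w) (hb : ∀ w ∈ U, DifferentiableAt ℝ b w)
    (ha1 : DifferentiableAt ℝ (pd1 a) z) (ha2 : DifferentiableAt ℝ (pd2 a) z)
    (hb1 : DifferentiableAt ℝ (pd1 b) z) (hb2 : DifferentiableAt ℝ (pd2 b) z) :
    lap (fun w => a w * b w) z
      = lap a z * b z + 2*(pd1 a z * pd1 b z + pd2 a z * pd2 b z) + a z * lap b z := by
  have e1 : ∀ w ∈ U, pd1 (fun w => a w * b w) w = pd1 a w * b w + a w * pd1 b w :=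
    fun w hw => fd_mul (ha w hw) (hb w hw) 1
  have e2 : ∀ w ∈ U, pd2 (fun w => a w * b w) w = pd2 a w * b w + a w * pd2 b w :=
    fun w hw => fd_mul (ha w hw) (hb w hw) I
  have c1 : pd1 (pd1 fun w => a w * b w) z
      = pd1 (fun w => pd1 a w * b w + a w * pd1 b w) z := pd1_congr hU e1 hz
  have c2 : pd2 (pd2 fun w => a w * b w) z
      = pd2 (fun w => pd2 a w * b w + a w * pd2 b w) z := pd2_congr hU e2 hz
  have d1 : pd1 (fun w => pd1 a w * b w + a w * pd1 b w) z
      = (pd1 (pd1 a) z * b z + pd1 a z * pd1 b z) + (pd1 a z * pd1 b z + a z * pd1 (pd1 b) z) := by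
    show fderiv ℝ (fun w => pd1 a w * b w + a w * pd1 b w) z 1 = _
    rw [fderiv_fun_add (f := fun w => pd1 a w * b w) (g := fun w => a w * pd1 b w) (ha1.mul (hb z hz)) ((ha z hz).mul hb1), ContinuousLinearMap.add_apply,
        fd_mul ha1 (hb z hz), fd_mul (ha z hz) hb1]
    rfl
  have d2 : pd2 (fun w => pd2 a w * b w + a w * pd2 b w) z
      = (pd2 (pd2 a) z * b z + pd2 a z * pd2 b z) + (pd2 a z * pd2 b z + a z * pd2 (pd2 b) z) := by
    show fderiv ℝ (fun w => pd2 a w * b w + a w * pd2 b w) z I = _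
    rw [fderiv_fun_add (f := fun w => pd2 a w * b w) (g := fun w => a w * pd2 b w) (ha2.mul (hb z hz)) ((ha z hz).mul hb2), ContinuousLinearMap.add_apply,
        fd_mul ha2 (hb z hz), fd_mul (ha z hz) hb2]
    rfl
  unfold lap
  rw [c1, c2, d1, d2]; ring

lemma key {U : Set ℂ} (hU : IsOpen U) {z : ℂ} (hz : z ∈ U)
    (f P Q P1 Q1 : ℂ → ℝ) (r2 s2 : ℝ)
    (hf : ContDiffOn ℝ 2 f U)
    (dP : ∀ w ∈ U, DifferentiableAt ℝ P w) (dQ : ∀ w ∈ U, DifferentiableAt ℝ Q w)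
    (dP1 : DifferentiableAt ℝ P1 z) (dQ1 : DifferentiableAt ℝ Q1 z)
    (fdP : ∀ w ∈ U, ∀ d : ℂ, fderiv ℝ P w d = d.re * P1 w - d.im * Q1 w)
    (fdQ : ∀ w ∈ U, ∀ d : ℂ, fderiv ℝ Q w d = d.re * Q1 w + d.im * P1 w)
    (fdP1z : ∀ d : ℂ, fderiv ℝ P1 z d = d.re * r2 - d.im * s2)
    (fdQ1z : ∀ d : ℂ, fderiv ℝ Q1 z d = d.re * s2 + d.im * r2) :
    lap (fun w => f w * (1 + (P w * P w + Q w * Q w))⁻¹) z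
      = (lap f z * (1 + (P z * P z + Q z * Q z))^2
          - 4*(pd1 f z * (P z * P1 z + Q z * Q1 z) + pd2 f z * (Q z * P1 z - P z * Q1 z))
              * (1 + (P z * P z + Q z * Q z))
          - 4*(f z) * (P1 z * P1 z + Q1 z * Q1 z) * (1 + (P z * P z + Q z * Q z))
          + 8*(f z) * ((P z * P1 z + Q z * Q1 z)^2 + (Q z * P1 z - P z * Q1 z)^2))
        / (1 + (P z * P z + Q z * Q z))^3 := by
  have df : ∀ w ∈ U, DifferentiableAt ℝ f w :=
    fun w hw => (hf.differentiableOn (by norm_num) w hw).differentiableAt (hU.mem_nhds hw)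
  have dT : ∀ w ∈ U, DifferentiableAt ℝ (fun x => 1 + (P x * P x + Q x * Q x)) w :=
    fun w hw => (differentiableAt_const _).add (((dP w hw).mul (dP w hw)).add ((dQ w hw).mul (dQ w hw)))
  have hT0 : ∀ w ∈ U, (1 + (P w * P w + Q w * Q w)) ≠ 0 :=
    fun w hw => ne_of_gt (by nlinarith [mul_self_nonneg (P w), mul_self_nonneg (Q w)])
  have dS : ∀ w ∈ U, DifferentiableAt ℝ (fun x => (1 + (P x * P x + Q x * Q x))⁻¹) w :=
    fun w hw => (dT w hw).inv (hT0 w hw)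
  -- derivative of T
  have fdT : ∀ w ∈ U, ∀ d : ℂ, fderiv ℝ (fun x => 1 + (P x * P x + Q x * Q x)) w d
      = 2*(P w * (d.re * P1 w - d.im * Q1 w) + Q w * (d.re * Q1 w + d.im * P1 w)) := by
    intro w hw d
    calc fderiv ℝ (fun x => 1 + (P x * P x + Q x * Q x)) w d
        = fderiv ℝ (fun _ : ℂ => (1:ℝ)) w d + fderiv ℝ (fun x => P x * P x + Q x * Q x) w d :=
          fd_add (differentiableAt_const _) (((dP w hw).mul (dP w hw)).add ((dQ w hw).mul (dQ w hw))) d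
      _ = fderiv ℝ (fun _ : ℂ => (1:ℝ)) w d
            + (fderiv ℝ (fun x => P x * P x) w d + fderiv ℝ (fun x => Q x * Q x) w d) := by
          rw [fd_add (a := fun x => P x * P x) (b := fun x => Q x * Q x) ((dP w hw).mul (dP w hw)) ((dQ w hw).mul (dQ w hw)) d]
      _ = 0 + ((fderiv ℝ P w d * P w + P w * fderiv ℝ P w d)
            + (fderiv ℝ Q w d * Q w + Q w * fderiv ℝ Q w d)) := by
          rw [fd_mul (dP w hw) (dP w hw) d, fd_mul (dQ w hw) (dQ w hw) d]
          simp
      _ = 2*(P w * (d.re * P1 w - d.im * Q1 w) + Q w * (d.re * Q1 w + d.im * P1 w)) := by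
          rw [fdP w hw d, fdQ w hw d]; ring
  -- derivative of S = T⁻¹
  have fdS : ∀ w ∈ U, ∀ d : ℂ, fderiv ℝ (fun x => (1 + (P x * P x + Q x * Q x))⁻¹) w d
      = -(2*(P w * (d.re * P1 w - d.im * Q1 w) + Q w * (d.re * Q1 w + d.im * P1 w)))
        / (1 + (P w * P w + Q w * Q w))^2 := by
    intro w hw d
    rw [fd_inv (dT w hw) (hT0 w hw) d, fdT w hw d]
  -- first partials of S on U, as nice quotients
  have eS1 : ∀ w ∈ U, pd1 (fun x => (1 + (P x * P x + Q x * Q x))⁻¹) w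
      = -(2*(P w * P1 w + Q w * Q1 w))
        / ((1 + (P w * P w + Q w * Q w)) * (1 + (P w * P w + Q w * Q w))) := by
    intro w hw
    show fderiv ℝ (fun x => (1 + (P x * P x + Q x * Q x))⁻¹) w 1 = _
    rw [fdS w hw 1]
    norm_num
    ring
  have eS2 : ∀ w ∈ U, pd2 (fun x => (1 + (P x * P x + Q x * Q x))⁻¹) w
      = -(2*(Q w * P1 w - P w * Q1 w))
        / ((1 + (P w * P w + Q w * Q w)) * (1 + (P w * P w + Q w * Q w))) := by
    intro w hw
    show fderiv ℝ (fun x => (1 + (P x * P x + Q x * Q x))⁻¹) w I = _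
    rw [fdS w hw I]
    norm_num
    ring
  -- values of first partials at z
  set t : ℝ := 1 + (P z * P z + Q z * Q z) with ht
  -- second partials of S at z
  have dN1 : DifferentiableAt ℝ (fun w => -(2*(P w * P1 w + Q w * Q1 w))) z :=
    ((((dP z hz).mul dP1).add ((dQ z hz).mul dQ1)).const_mul 2).neg
  have dN2 : DifferentiableAt ℝ (fun w => -(2*(Q w * P1 w - P w * Q1 w))) z :=
    ((((dQ z hz).mul dP1).sub ((dP z hz).mul dQ1)).const_mul 2).neg
  have dD : DifferentiableAt ℝ
      (fun w => (1 + (P w * P w + Q w * Q w)) * (1 + (P w * P w + Q w * Q w))) z :=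
    (dT z hz).mul (dT z hz)
  have hD0 : (1 + (P z * P z + Q z * Q z)) * (1 + (P z * P z + Q z * Q z)) ≠ 0 :=
    mul_ne_zero (hT0 z hz) (hT0 z hz)
  have fdN1 : fderiv ℝ (fun w => -(2*(P w * P1 w + Q w * Q1 w))) z 1
      = -(2*(P1 z * P1 z + P z * r2 + (Q1 z * Q1 z + Q z * s2))) := by
    calc fderiv ℝ (fun w => -(2*(P w * P1 w + Q w * Q1 w))) z 1
        = -(fderiv ℝ (fun w => 2*(P w * P1 w + Q w * Q1 w)) z 1) := fd_neg 1
      _ = -(2 * fderiv ℝ (fun w => P w * P1 w + Q w * Q1 w) z 1) := by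
          rw [fd_cmul (a := fun w => P w * P1 w + Q w * Q1 w) (((dP z hz).mul dP1).add ((dQ z hz).mul dQ1)) 2 1]
      _ = -(2 * ((fderiv ℝ P z 1 * P1 z + P z * fderiv ℝ P1 z 1)
            + (fderiv ℝ Q z 1 * Q1 z + Q z * fderiv ℝ Q1 z 1))) := by
          rw [fd_add (a := fun w => P w * P1 w) (b := fun w => Q w * Q1 w) ((dP z hz).mul dP1) ((dQ z hz).mul dQ1) 1,
              fd_mul (dP z hz) dP1 1, fd_mul (dQ z hz) dQ1 1]
      _ = -(2*(P1 z * P1 z + P z * r2 + (Q1 z * Q1 z + Q z * s2))) := by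
          rw [fdP z hz 1, fdQ z hz 1, fdP1z 1, fdQ1z 1]
          norm_num
  have fdN2 : fderiv ℝ (fun w => -(2*(Q w * P1 w - P w * Q1 w))) z I
      = -(2*(P1 z * P1 z - Q z * s2 + (Q1 z * Q1 z - P z * r2))) := by
    calc fderiv ℝ (fun w => -(2*(Q w * P1 w - P w * Q1 w))) z I
        = -(fderiv ℝ (fun w => 2*(Q w * P1 w - P w * Q1 w)) z I) := fd_neg I
      _ = -(2 * fderiv ℝ (fun w => Q w * P1 w - P w * Q1 w) z I) := by
          rw [fd_cmul (a := fun w => Q w * P1 w - P w * Q1 w) (((dQ z hz).mul dP1).sub ((dP z hz).mul dQ1)) 2 I]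
      _ = -(2 * (fderiv ℝ (fun w => Q w * P1 w) z I - fderiv ℝ (fun w => P w * Q1 w) z I)) := by
          rw [fderiv_fun_sub (f := fun w => Q w * P1 w) (g := fun w => P w * Q1 w) ((dQ z hz).mul dP1) ((dP z hz).mul dQ1)]
          simp
      _ = -(2 * ((fderiv ℝ Q z I * P1 z + Q z * fderiv ℝ P1 z I)
            - (fderiv ℝ P z I * Q1 z + P z * fderiv ℝ Q1 z I))) := by
          rw [fd_mul (dQ z hz) dP1 I, fd_mul (dP z hz) dQ1 I]
      _ = -(2*(P1 z * P1 z - Q z * s2 + (Q1 z * Q1 z - P z * r2))) := by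
          rw [fdP z hz I, fdQ z hz I, fdP1z I, fdQ1z I]
          simp
          ring
  have fdD : ∀ d : ℂ, fderiv ℝ
      (fun w => (1 + (P w * P w + Q w * Q w)) * (1 + (P w * P w + Q w * Q w))) z d
      = 2 * (2*(P z * (d.re * P1 z - d.im * Q1 z) + Q z * (d.re * Q1 z + d.im * P1 z))) * t := by
    intro d
    rw [fd_mul (dT z hz) (dT z hz) d, fdT z hz d, ← ht]
    ring
  have s11 : pd1 (pd1 (fun x => (1 + (P x * P x + Q x * Q x))⁻¹)) z
      = (-(2*(P1 z * P1 z + P z * r2 + (Q1 z * Q1 z + Q z * s2))) * (t*t)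
          - -(2*(P z * P1 z + Q z * Q1 z)) * (2 * (2*(P z * P1 z + Q z * Q1 z)) * t))
        / (t*t)^2 := by
    rw [pd1_congr hU eS1 hz]
    show fderiv ℝ (fun w => -(2*(P w * P1 w + Q w * Q1 w))
        / ((1 + (P w * P w + Q w * Q w)) * (1 + (P w * P w + Q w * Q w)))) z 1 = _
    rw [fd_div dN1 dD hD0 1, fdN1, fdD 1, ← ht]
    norm_num
  have s22 : pd2 (pd2 (fun x => (1 + (P x * P x + Q x * Q x))⁻¹)) z
      = (-(2*(P1 z * P1 z - Q z * s2 + (Q1 z * Q1 z - P z * r2))) * (t*t)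
          - -(2*(Q z * P1 z - P z * Q1 z)) * (2 * (2*(Q z * P1 z - P z * Q1 z)) * t))
        / (t*t)^2 := by
    rw [pd2_congr hU eS2 hz]
    show fderiv ℝ (fun w => -(2*(Q w * P1 w - P w * Q1 w))
        / ((1 + (P w * P w + Q w * Q w)) * (1 + (P w * P w + Q w * Q w)))) z I = _
    rw [fd_div dN2 dD hD0 I, fdN2, fdD I, ← ht]
    norm_num
    ring
  have ddiv1 : DifferentiableAt ℝ (fun w => -(2*(P w * P1 w + Q w * Q1 w))
      / ((1 + (P w * P w + Q w * Q w)) * (1 + (P w * P w + Q w * Q w)))) z := by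
    have he : (fun w => -(2*(P w * P1 w + Q w * Q1 w))
        / ((1 + (P w * P w + Q w * Q w)) * (1 + (P w * P w + Q w * Q w))))
        = fun w => -(2*(P w * P1 w + Q w * Q1 w))
          * ((1 + (P w * P w + Q w * Q w)) * (1 + (P w * P w + Q w * Q w)))⁻¹ :=
      funext fun w => div_eq_mul_inv _ _
    rw [he]; exact dN1.mul (dD.inv hD0)
  have ddiv2 : DifferentiableAt ℝ (fun w => -(2*(Q w * P1 w - P w * Q1 w))
      / ((1 + (P w * P w + Q w * Q w)) * (1 + (P w * P w + Q w * Q w)))) z := by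
    have he : (fun w => -(2*(Q w * P1 w - P w * Q1 w))
        / ((1 + (P w * P w + Q w * Q w)) * (1 + (P w * P w + Q w * Q w))))
        = fun w => -(2*(Q w * P1 w - P w * Q1 w))
          * ((1 + (P w * P w + Q w * Q w)) * (1 + (P w * P w + Q w * Q w)))⁻¹ :=
      funext fun w => div_eq_mul_inv _ _
    rw [he]; exact dN2.mul (dD.inv hD0)
  have dpd1S : DifferentiableAt ℝ (pd1 (fun x => (1 + (P x * P x + Q x * Q x))⁻¹)) z :=
    diff_congr hU eS1 hz ddiv1
  have dpd2S : DifferentiableAt ℝ (pd2 (fun x => (1 + (P x * P x + Q x * Q x))⁻¹)) z :=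
    diff_congr hU eS2 hz ddiv2
  have lapb : lap (fun x => (1 + (P x * P x + Q x * Q x))⁻¹) z
      = (-(2*(P1 z * P1 z + P z * r2 + (Q1 z * Q1 z + Q z * s2))) * (t*t)
          - -(2*(P z * P1 z + Q z * Q1 z)) * (2 * (2*(P z * P1 z + Q z * Q1 z)) * t))
        / (t*t)^2
       + (-(2*(P1 z * P1 z - Q z * s2 + (Q1 z * Q1 z - P z * r2))) * (t*t)
          - -(2*(Q z * P1 z - P z * Q1 z)) * (2 * (2*(Q z * P1 z - P z * Q1 z)) * t))
        / (t*t)^2 := by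
    unfold lap
    rw [s11, s22]
  have main := lap_mul hU hz df dS (diff_pd1 hU hf hz) (diff_pd2 hU hf hz) dpd1S dpd2S
  rw [main, lapb, eS1 z hz, eS2 z hz, ← ht]
  have ht0 : t ≠ 0 := by rw [ht]; exact hT0 z hz
  field_simp
  ring


lemma fd_re {G : ℂ → ℂ} {c z : ℂ} (h : HasDerivAt G c z) (d : ℂ) :
    fderiv ℝ (fun w => (G w).re) z d = (d * c).re := by
  have h1 := h.hasFDerivAt.restrictScalars ℝ
  have h2 := (Complex.reCLM.hasFDerivAt (x := G z)).comp z h1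
  have h3 : HasFDerivAt (fun w => (G w).re)
      (Complex.reCLM.comp ((ContinuousLinearMap.smulRight (1 : ℂ →L[ℂ] ℂ) c).restrictScalars ℝ)) z := h2
  rw [h3.fderiv]; simp [smul_eq_mul]

lemma fd_im {G : ℂ → ℂ} {c z : ℂ} (h : HasDerivAt G c z) (d : ℂ) :
    fderiv ℝ (fun w => (G w).im) z d = (d * c).im := by
  have h1 := h.hasFDerivAt.restrictScalars ℝ
  have h2 := (Complex.imCLM.hasFDerivAt (x := G z)).comp z h1
  have h3 : HasFDerivAt (fun w => (G w).im)
      (Complex.imCLM.comp ((ContinuousLinearMap.smulRight (1 : ℂ →L[ℂ] ℂ) c).restrictScalars ℝ)) z := h2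
  rw [h3.fderiv]; simp [smul_eq_mul]

lemma fd_re2 {G : ℂ → ℂ} {c z : ℂ} (h : HasDerivAt G c z) :
    DifferentiableAt ℝ (fun w => (G w).re) z :=
  (Complex.reCLM.differentiable.differentiableAt).comp z ((h.differentiableAt).restrictScalars ℝ)

lemma fd_im2 {G : ℂ → ℂ} {c z : ℂ} (h : HasDerivAt G c z) :
    DifferentiableAt ℝ (fun w => (G w).im) z :=
  (Complex.imCLM.differentiable.differentiableAt).comp z ((h.differentiableAt).restrictScalars ℝ)

end StmtAux

open StmtAux in
/-- the pointwise identity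
Δh + (8|g'|²/T²)h = (|g'|²/T²)(T·Δf/|g'|² − 4⟨∇f, g/g'⟩ + 4f) for h = f/T, T = 1+|g|². -/
theorem stmt_1 (U : Set ℂ) (hU : IsOpen U)
    (g g' : ℂ → ℂ) (hg : ∀ z ∈ U, HasDerivAt g (g' z) z) (hg' : ∀ z ∈ U, g' z ≠ 0)
    (f : ℂ → ℝ) (hf : ContDiffOn ℝ 2 f U) :
    ∀ z ∈ U,
      lap (fun w => f w / (1 + ‖g w‖ ^ 2)) z
          + (8 * ‖g' z‖ ^ 2 / (1 + ‖g z‖ ^ 2) ^ 2) *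
            (f z / (1 + ‖g z‖ ^ 2))
        = (‖g' z‖ ^ 2 / (1 + ‖g z‖ ^ 2) ^ 2) *
            ((1 + ‖g z‖ ^ 2) * lap f z / ‖g' z‖ ^ 2
              - 4 * inn ((pd1 f z : ℂ) + (pd2 f z : ℂ) * Complex.I) (g z / g' z)
              + 4 * f z) := by
  intro z hz
  have hgd : DifferentiableOn ℂ g U := fun w hw => (hg w hw).differentiableAt.differentiableWithinAt
  have hgan : AnalyticOnNhd ℂ g U := hgd.analyticOnNhd hU
  have hg2 : ∀ w ∈ U, HasDerivAt g' (deriv (deriv g) w) w := by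
    intro w hw
    have h1 : AnalyticAt ℂ (deriv g) w := hgan.deriv w hw
    have h2 : HasDerivAt (deriv g) (deriv (deriv g) w) w := h1.differentiableAt.hasDerivAt
    exact h2.congr_of_eventuallyEq (ev_eq hU (fun x hx => ((hg x hx).deriv).symm) hw)
  have dP : ∀ w ∈ U, DifferentiableAt ℝ (fun x => (g x).re) w := fun w hw => fd_re2 (hg w hw)
  have dQ : ∀ w ∈ U, DifferentiableAt ℝ (fun x => (g x).im) w := fun w hw => fd_im2 (hg w hw)
  have dP1 : DifferentiableAt ℝ (fun x => (g' x).re) z := fd_re2 (hg2 z hz)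
  have dQ1 : DifferentiableAt ℝ (fun x => (g' x).im) z := fd_im2 (hg2 z hz)
  have fdP : ∀ w ∈ U, ∀ d : ℂ, fderiv ℝ (fun x => (g x).re) w d
      = d.re * (g' w).re - d.im * (g' w).im := by
    intro w hw d; rw [fd_re (hg w hw) d, Complex.mul_re]
  have fdQ : ∀ w ∈ U, ∀ d : ℂ, fderiv ℝ (fun x => (g x).im) w d
      = d.re * (g' w).im + d.im * (g' w).re := by
    intro w hw d; rw [fd_im (hg w hw) d, Complex.mul_im]
  have fdP1z : ∀ d : ℂ, fderiv ℝ (fun x => (g' x).re) z d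
      = d.re * (deriv (deriv g) z).re - d.im * (deriv (deriv g) z).im := by
    intro d; rw [fd_re (hg2 z hz) d, Complex.mul_re]
  have fdQ1z : ∀ d : ℂ, fderiv ℝ (fun x => (g' x).im) z d
      = d.re * (deriv (deriv g) z).im + d.im * (deriv (deriv g) z).re := by
    intro d; rw [fd_im (hg2 z hz) d, Complex.mul_im]
  have K := key hU hz f (fun x => (g x).re) (fun x => (g x).im)
    (fun x => (g' x).re) (fun x => (g' x).im)
    (deriv (deriv g) z).re (deriv (deriv g) z).im
    hf dP dQ dP1 dQ1 fdP fdQ fdP1z fdQ1z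
  have hfun : (fun w => f w / (1 + ‖g w‖ ^ 2))
      = fun w => f w * (1 + ((g w).re * (g w).re + (g w).im * (g w).im))⁻¹ := by
    funext w
    rw [div_eq_mul_inv, Complex.sq_norm, Complex.normSq_apply]
  rw [hfun, K]
  have hinn : inn ((pd1 f z : ℂ) + (pd2 f z : ℂ) * Complex.I) (g z / g' z)
      = pd1 f z * (((g z).re * (g' z).re + (g z).im * (g' z).im)
            / ((g' z).re * (g' z).re + (g' z).im * (g' z).im))
        + pd2 f z * (((g z).im * (g' z).re - (g z).re * (g' z).im)
            / ((g' z).re * (g' z).re + (g' z).im * (g' z).im)) := by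
    simp [inn, Complex.mul_re, Complex.div_re, Complex.div_im, Complex.normSq_apply]
    ring
  rw [hinn]
  simp only [Complex.sq_norm, Complex.normSq_apply]
  have hE0 : (g' z).re * (g' z).re + (g' z).im * (g' z).im ≠ 0 := by
    have := Complex.normSq_pos.mpr (hg' z hz)
    rw [Complex.normSq_apply] at this
    exact ne_of_gt this
  have ht0 : (1 : ℝ) + ((g z).re * (g z).re + (g z).im * (g z).im) ≠ 0 :=
    ne_of_gt (by nlinarith [mul_self_nonneg (g z).re, mul_self_nonneg (g z).im])
  have hE0' : (g' z).re ^ 2 + (g' z).im ^ 2 ≠ 0 := by rw [sq, sq]; exact hE0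
  field_simp
  ring
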